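/- For every positive integer n, the rational number (1!·4!·7!···(3n-2)!)/(n!·(n+1)!···(2n-1)!) equals (-3)^{n(n-1)/2} · ∏_{i=1}^{n} ∏_{j=1}^{n} (3(j-i)+1)/(j-i+n). -/

import Mathlib

open Finset

lemma swap1 (g : ℕ → ℚ) (n : ℕ) :
    ∏ k ∈ range n, ∏ d ∈ range (k+1), g d = ∏ d ∈ range n, g d ^ (n - d) := by
  induction n with
  | zero => simp
  | succ n ih =>
    rw [prod_range_succ, ih]
    have h1 : ∏ d ∈ range (n+1), g d ^ (n + 1 - d)
        = ∏ d ∈ range (n+1), g d ^ (n - d) * g d := by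
      refine prod_congr rfl fun d hd => ?_
      rw [mem_range] at hd
      rw [← pow_succ]
      congr 1
      omega
    rw [h1, prod_mul_distrib, prod_range_succ (fun d => g d ^ (n-d)), Nat.sub_self, pow_zero,
      mul_one]

lemma swap2 (g : ℕ → ℚ) (n : ℕ) :
    ∏ k ∈ range n, ∏ d ∈ range k, g d = ∏ d ∈ range n, g d ^ (n - 1 - d) := by
  induction n with
  | zero => simp
  | succ n ih =>
    rw [prod_range_succ, ih, prod_range_succ (fun d => g d ^ (n + 1 - 1 - d))]
    simp only [Nat.add_sub_cancel, Nat.sub_self, pow_zero, mul_one]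
    rw [← prod_mul_distrib]
    refine prod_congr rfl fun d hd => ?_
    rw [mem_range] at hd
    rw [← pow_succ]
    congr 1
    omega

lemma diag (h : ℤ → ℚ) (n : ℕ) :
    ∏ i ∈ range n, ∏ j ∈ range n, h ((j:ℤ) - (i:ℤ)) =
      (∏ d ∈ range n, h d ^ (n - d)) * ∏ d ∈ range n, h (-(d+1)) ^ (n - 1 - d) := by
  induction n with
  | zero => simp
  | succ n ih =>
    have col : ∀ i : ℕ, ∏ j ∈ range (n+1), h ((j:ℤ) - (i:ℤ))
        = (∏ j ∈ range n, h ((j:ℤ) - (i:ℤ))) * h ((n:ℤ) - i) :=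
      fun i => prod_range_succ (fun j => h ((j:ℤ) - (i:ℤ))) n
    rw [prod_range_succ]
    simp only [col]
    rw [prod_mul_distrib, ih]
    have row : ∏ j ∈ range n, h ((j:ℤ) - (n:ℤ)) = ∏ d ∈ range n, h (-((d:ℤ)+1)) := by
      rw [← prod_range_reflect (fun d => h (-((d:ℤ)+1)))]
      refine prod_congr rfl fun j hj => ?_
      rw [mem_range] at hj
      congr 1
      omega
    have colp : ∏ i ∈ range (n+1), h ((n:ℤ) - (i:ℤ)) = ∏ d ∈ range (n+1), h d := by
      rw [← prod_range_reflect (fun d => h (d:ℤ)) (n+1)]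
      refine prod_congr rfl fun i hi => ?_
      rw [mem_range] at hi
      congr 1
      omega
    have pos : ∏ d ∈ range (n+1), h d ^ (n + 1 - d)
        = (∏ d ∈ range n, h d ^ (n - d)) * ∏ d ∈ range (n+1), h d := by
      have : ∏ d ∈ range (n+1), h d ^ (n + 1 - d)
          = ∏ d ∈ range (n+1), h d ^ (n - d) * h d := by
        refine prod_congr rfl fun d hd => ?_
        rw [mem_range] at hd
        rw [← pow_succ]
        congr 1
        omega
      rw [this, prod_mul_distrib, prod_range_succ (fun d => h (d:ℤ) ^ (n-d)), Nat.sub_self,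
        pow_zero, mul_one]
    have neg : ∏ d ∈ range (n+1), h (-((d:ℤ)+1)) ^ (n + 1 - 1 - d)
        = (∏ d ∈ range n, h (-((d:ℤ)+1)) ^ (n - 1 - d)) * ∏ d ∈ range n, h (-((d:ℤ)+1)) := by
      rw [prod_range_succ (fun d => h (-((d:ℤ)+1)) ^ (n + 1 - 1 - d))]
      simp only [Nat.add_sub_cancel, Nat.sub_self, pow_zero, mul_one]
      rw [← prod_mul_distrib]
      refine prod_congr rfl fun d hd => ?_
      rw [mem_range] at hd
      rw [← pow_succ]
      congr 1
      omega
    rw [pos, neg, row, ← colp, prod_range_succ (fun i => h ((n:ℤ) - (i:ℤ)))]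
    ring

lemma L1 (n : ℕ) :
    (∏ k ∈ range (n+1), (k:ℚ)^k * (Nat.factorial k : ℚ)) = ((Nat.factorial n : ℚ))^(n+1) := by
  induction n with
  | zero => simp
  | succ n ih =>
    rw [prod_range_succ, ih]
    have hf : ((Nat.factorial (n+1) : ℚ)) = ((n:ℚ)+1) * (Nat.factorial n : ℚ) := by
      rw [Nat.factorial_succ]; push_cast; ring
    rw [hf, mul_pow]
    push_cast
    ring

lemma L2p (n k : ℕ) (hn : 1 ≤ n) :
    ((Nat.factorial (n+k) : ℚ)) = (Nat.factorial (n-1) : ℚ) * ∏ d ∈ range (k+1), ((n:ℚ)+d) := by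
  induction k with
  | zero =>
    obtain ⟨m, rfl⟩ := Nat.exists_eq_add_of_le hn
    simp [show 1 + m = m + 1 by ring, Nat.factorial_succ]
    ring
  | succ k ih =>
    rw [prod_range_succ, show n + (k+1) = (n+k)+1 by ring, Nat.factorial_succ, ← mul_assoc]
    push_cast [ih]
    ring

lemma L3p (k : ℕ) :
    ((Nat.factorial (3*k+1) : ℚ)) =
      3^k * (Nat.factorial k : ℚ) * (3*(k:ℚ)+1) * ∏ d ∈ range k, ((3*(d:ℚ)+1)*(3*(d:ℚ)+2)) := by
  induction k with
  | zero => simp [Nat.factorial]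
  | succ k ih =>
    have h1 : ((Nat.factorial (3*(k+1)+1) : ℚ))
        = (3*(k:ℚ)+4)*(3*(k:ℚ)+3)*(3*(k:ℚ)+2)*(Nat.factorial (3*k+1) : ℚ) := by
      rw [show 3*(k+1)+1 = ((3*k+1)+1)+1+1 by ring, Nat.factorial_succ, Nat.factorial_succ,
        Nat.factorial_succ]
      push_cast
      ring
    have hf : ((Nat.factorial (k+1) : ℚ)) = ((k:ℚ)+1) * (Nat.factorial k : ℚ) := by
      rw [Nat.factorial_succ]; push_cast; ring
    rw [h1, ih, prod_range_succ, hf]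
    push_cast
    ring

theorem asm_formulas_agree (n : ℕ) (hn : 1 ≤ n) :
    (∏ k ∈ Finset.range n, ((Nat.factorial (3 * k + 1) : ℚ))) /
      (∏ k ∈ Finset.range n, ((Nat.factorial (n + k) : ℚ))) =
    (-3 : ℚ) ^ (n * (n - 1) / 2) *
      ∏ i ∈ Finset.Icc 1 n, ∏ j ∈ Finset.Icc 1 n,
        (3 * ((j : ℚ) - (i : ℚ)) + 1) / ((j : ℚ) - (i : ℚ) + (n : ℚ)) := by
  set T := n * (n - 1) / 2 with hTdef
  have hT : ∑ d ∈ range n, d = T := by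
    have := sum_range_id_mul_two n
    omega
  have hT2 : ∑ d ∈ range n, (n - 1 - d) = T := by
    rw [← hT]
    exact Finset.sum_range_reflect (fun i => i) n
  set h : ℤ → ℚ := fun d => (3 * (d : ℚ) + 1) / ((d : ℚ) + (n : ℚ)) with hh
  -- Step A: rewrite the double Icc product via diag
  have stepA : (∏ i ∈ Finset.Icc 1 n, ∏ j ∈ Finset.Icc 1 n,
        (3 * ((j : ℚ) - (i : ℚ)) + 1) / ((j : ℚ) - (i : ℚ) + (n : ℚ)))
      = (∏ d ∈ range n, h d ^ (n - d)) * ∏ d ∈ range n, h (-(d+1)) ^ (n - 1 - d) := by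
    rw [← diag h n]
    rw [show Finset.Icc 1 n = Finset.Ico 1 (n+1) from rfl, Finset.prod_Ico_eq_prod_range]
    simp only [Nat.add_sub_cancel]
    refine prod_congr rfl fun i _ => ?_
    rw [Finset.prod_Ico_eq_prod_range]
    simp only [Nat.add_sub_cancel]
    refine prod_congr rfl fun j _ => ?_
    rw [hh]
    congr 1 <;> push_cast <;> ring
  rw [stepA]
  -- positive diagonal part
  have hpos : (∏ d ∈ range n, h d ^ (n - d))
      = (∏ d ∈ range n, (3*(d:ℚ)+1) ^ (n - d)) / ∏ d ∈ range n, ((n:ℚ)+d) ^ (n - d) := by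
    rw [← prod_div_distrib]
    refine prod_congr rfl fun d _ => ?_
    rw [hh, ← div_pow]
    congr 2 <;> push_cast <;> ring
  -- negative diagonal part
  have hneg : (∏ d ∈ range n, h (-(d+1)) ^ (n - 1 - d))
      = ((-1:ℚ)^T * ∏ d ∈ range n, (3*(d:ℚ)+2) ^ (n - 1 - d)) / ∏ m ∈ range n, (m:ℚ) ^ m := by
    have e1 : ∀ d ∈ range n, h (-((d:ℤ)+1)) ^ (n - 1 - d)
        = ((-1:ℚ)^(n-1-d) * (3*(d:ℚ)+2) ^ (n - 1 - d)) / ((n:ℚ)-(d:ℚ)-1) ^ (n-1-d) := by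
      intro d _
      rw [hh, ← mul_pow, ← div_pow]
      congr 2 <;> push_cast <;> ring
    rw [prod_congr rfl e1, prod_div_distrib, prod_mul_distrib,
      prod_pow_eq_pow_sum (range n) (fun d => n-1-d) (-1 : ℚ), hT2]
    congr 1
    rw [← prod_range_reflect (fun m => (m:ℚ)^m) n]
    refine prod_congr rfl fun d hd => ?_
    rw [mem_range] at hd
    rw [Nat.cast_sub (by omega : d ≤ n - 1), Nat.cast_sub (by omega : 1 ≤ n)]
    push_cast
    ring
  rw [hpos, hneg]
  -- abbreviations
  set Q : ℚ := (Nat.factorial (n-1) : ℚ) with hQdef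
  set K : ℚ := ∏ k ∈ range n, (Nat.factorial k : ℚ) with hKdef
  set J : ℚ := ∏ k ∈ range n, (3*(k:ℚ)+1) with hJdef
  set Npos : ℚ := ∏ d ∈ range n, (3*(d:ℚ)+1) ^ (n - d) with hNposdef
  set Nneg : ℚ := ∏ d ∈ range n, (3*(d:ℚ)+2) ^ (n - 1 - d) with hNnegdef
  set P1 : ℚ := ∏ d ∈ range n, (3*(d:ℚ)+1) ^ (n - 1 - d) with hP1def
  set Dpos : ℚ := ∏ d ∈ range n, ((n:ℚ)+d) ^ (n - d) with hDposdef
  set D2 : ℚ := ∏ m ∈ range n, (m:ℚ) ^ m with hD2def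
  -- structural identities
  have hF : ∏ k ∈ range n, ((Nat.factorial (3*k+1) : ℚ))
      = 3^T * K * J * ∏ d ∈ range n, ((3*(d:ℚ)+1)*(3*(d:ℚ)+2))^(n-1-d) := by
    rw [hKdef, hJdef, prod_congr rfl (fun k _ => L3p k), prod_mul_distrib, prod_mul_distrib,
      prod_mul_distrib, prod_pow_eq_pow_sum (range n) (fun k => k) (3:ℚ), hT,
      swap2 (fun d => (3*(d:ℚ)+1)*(3*(d:ℚ)+2)) n]
  have hB : ∏ k ∈ range n, ((Nat.factorial (n+k) : ℚ)) = Q^n * Dpos := by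
    rw [hQdef, hDposdef, prod_congr rfl (fun k _ => L2p n k hn), prod_mul_distrib, prod_const,
      card_range, swap1 (fun d => (n:ℚ)+d) n]
  have hQ : D2 * K = Q^n := by
    have h0 := L1 (n-1)
    rw [show n-1+1 = n by omega] at h0
    rw [hD2def, hKdef, hQdef, ← h0, prod_mul_distrib]
  have hG2 : ∏ d ∈ range n, ((3*(d:ℚ)+1)*(3*(d:ℚ)+2))^(n-1-d) = P1 * Nneg := by
    rw [hP1def, hNnegdef, ← prod_mul_distrib]
    exact prod_congr rfl fun d _ => mul_pow _ _ _
  have hNpos : Npos = J * P1 := by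
    rw [hNposdef, hJdef, hP1def, ← prod_mul_distrib]
    refine prod_congr rfl fun d hd => ?_
    rw [mem_range] at hd
    rw [show n - d = (n - 1 - d) + 1 by omega, pow_succ]
    ring
  -- nonzeroness
  have hn' : (0:ℚ) < (n:ℚ) := by exact_mod_cast hn
  have hK0 : K ≠ 0 := prod_ne_zero_iff.mpr fun k _ => Nat.cast_ne_zero.mpr k.factorial_ne_zero
  have hB0 : (∏ k ∈ range n, ((Nat.factorial (n+k) : ℚ))) ≠ 0 :=
    prod_ne_zero_iff.mpr fun k _ => Nat.cast_ne_zero.mpr (n+k).factorial_ne_zero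
  have hDpos0 : Dpos ≠ 0 := prod_ne_zero_iff.mpr fun d _ =>
    pow_ne_zero _ (ne_of_gt (by positivity))
  have hD20 : D2 ≠ 0 := prod_ne_zero_iff.mpr fun m _ => by
    rcases Nat.eq_zero_or_pos m with rfl | hm
    · norm_num
    · exact pow_ne_zero _ (by exact_mod_cast hm.ne')
  have key : (-3:ℚ)^T * (-1:ℚ)^T = 3^T := by rw [← mul_pow]; norm_num
  have hRHS : (-3:ℚ)^T * (Npos/Dpos * (((-1:ℚ)^T * Nneg)/D2))
      = (3^T * Npos * Nneg) / (Dpos * D2) := by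
    rw [div_mul_div_comm, mul_div_assoc']
    congr 1
    linear_combination Npos * Nneg * key
  rw [hRHS, div_eq_div_iff hB0 (mul_ne_zero hDpos0 hD20), hF, hB, hNpos, hG2, ← hQ]
  ring
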